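/- If (X_t)_{t∈ℤ} is a strictly stationary sequence of real random variables with common continuous marginal cdf F that is α-mixing, i.e., α_X(t) := sup{|P(A∩B) − P(A)P(B)| : A ∈ σ(X_u : u ≤ 0), B ∈ σ(X_v : v ≥ t)} → 0 as t → ∞, then X_t is temperately dependent: for every x ∈ (a_X, b_X), where a_X = sup{x : F(x)=0} and b_X = inf{x : F(x)=1}, one has P(min_{1≤t≤n} X_t ≥ x) → 0 and P(max_{1≤t≤n} X_t ≤ x) → 0 as n → ∞. -/

import Mathlib

open MeasureTheory ProbabilityTheory Filter
open scoped ENNReal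

/-- The maximum of `X 1, …, X n`. -/
noncomputable def rmax {Ω : Type*} (X : ℕ → Ω → ℝ) (n : ℕ) (ω : Ω) : ℝ :=
  (Finset.Icc 1 (max n 1)).sup' (Finset.nonempty_Icc.mpr (le_max_right n 1)) fun t => X t ω

/-- The minimum of `X 1, …, X n`. -/
noncomputable def rmin {Ω : Type*} (X : ℕ → Ω → ℝ) (n : ℕ) (ω : Ω) : ℝ :=
  (Finset.Icc 1 (max n 1)).inf' (Finset.nonempty_Icc.mpr (le_max_right n 1)) fun t => X t ω

/-- The cumulative distribution function of a random variable `X` under `P`. -/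
noncomputable def cdfOf {Ω : Type*} [MeasurableSpace Ω] (P : Measure Ω) (X : Ω → ℝ) : ℝ → ℝ :=
  fun x => (P {ω | X ω ≤ x}).toReal

/-- Lower endpoint `a_X = sup {x : F x = 0}` of the support of a cdf `F`. -/
noncomputable def lowerEnd (F : ℝ → ℝ) : EReal :=
  sSup ((fun x : ℝ => (x : EReal)) '' {x | F x = 0})

/-- Upper endpoint `b_X = inf {x : F x = 1}` of the support of a cdf `F`. -/
noncomputable def upperEnd (F : ℝ → ℝ) : EReal :=
  sInf ((fun x : ℝ => (x : EReal)) '' {x | F x = 1})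

/-- The σ-algebra `σ(X u : u ≤ 0)` generated by the past of the sequence. -/
def pastSigma {Ω : Type*} (X : ℤ → Ω → ℝ) : MeasurableSpace Ω :=
  ⨆ u : ℤ, ⨆ _ : u ≤ 0, MeasurableSpace.comap (X u) inferInstance

/-- The σ-algebra `σ(X v : v ≥ t)` generated by the future of the sequence from time `t`. -/
def futureSigma {Ω : Type*} (X : ℤ → Ω → ℝ) (t : ℤ) : MeasurableSpace Ω :=
  ⨆ v : ℤ, ⨆ _ : t ≤ v, MeasurableSpace.comap (X v) inferInstance

/-- The strong (α-) mixing coefficient of the sequence `X` at lag `t`. -/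
noncomputable def alphaMix {Ω : Type*} [MeasurableSpace Ω] (P : Measure Ω)
    (X : ℤ → Ω → ℝ) (t : ℤ) : ℝ :=
  sSup {r : ℝ | ∃ A B : Set Ω, MeasurableSet[pastSigma X] A ∧
    MeasurableSet[futureSigma X t] B ∧
    r = |(P (A ∩ B)).toReal - (P A).toReal * (P B).toReal|}

/-- Strict stationarity of the two-sided sequence `X`. -/
def StrictlyStationaryZ {Ω : Type*} [MeasurableSpace Ω] (P : Measure Ω)
    (X : ℤ → Ω → ℝ) : Prop :=
  ∀ (k : ℕ) (t : ℤ),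
    Measure.map (fun ω => fun i : Fin k => X (1 + t + (i : ℕ)) ω) P =
      Measure.map (fun ω => fun i : Fin k => X (1 + (i : ℕ)) ω) P

set_option linter.unusedSectionVars false

section MixAux

variable {Ω : Type*} [MeasurableSpace Ω] (P : Measure Ω) [IsProbabilityMeasure P]
  (X : ℤ → Ω → ℝ)

/-- The event that `X i ∈ S` for all `i ∈ [a, b]`. -/
def Ev (S : Set ℝ) (a b : ℤ) : Set Ω := {ω | ∀ i ∈ Finset.Icc a b, X i ω ∈ S}

variable {X}

lemma Ev_eq (S : Set ℝ) (a b : ℤ) :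
    Ev X S a b = ⋂ i ∈ Finset.Icc a b, X i ⁻¹' S := by
  ext ω; simp [Ev]

lemma Ev_past {S : Set ℝ} (hS : MeasurableSet S) {a b : ℤ} (hb : b ≤ 0) :
    MeasurableSet[pastSigma X] (Ev X S a b) := by
  rw [Ev_eq]
  refine MeasurableSet.biInter (Finset.Icc a b).countable_toSet fun i hi => ?_
  have hi0 : i ≤ 0 := le_trans (Finset.mem_Icc.mp hi).2 hb
  have h1 : MeasurableSpace.comap (X i) inferInstance ≤ pastSigma X :=
    le_iSup₂ (f := fun u (_ : u ≤ 0) => MeasurableSpace.comap (X u) inferInstance) i hi0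
  exact h1 _ ⟨S, hS, rfl⟩

lemma Ev_future {S : Set ℝ} (hS : MeasurableSet S) {a b t : ℤ} (ha : t ≤ a) :
    MeasurableSet[futureSigma X t] (Ev X S a b) := by
  rw [Ev_eq]
  refine MeasurableSet.biInter (Finset.Icc a b).countable_toSet fun i hi => ?_
  have hi0 : t ≤ i := le_trans ha (Finset.mem_Icc.mp hi).1
  have h1 : MeasurableSpace.comap (X i) inferInstance ≤ futureSigma X t :=
    le_iSup₂ (f := fun v (_ : t ≤ v) => MeasurableSpace.comap (X v) inferInstance) i hi0
  exact h1 _ ⟨S, hS, rfl⟩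

lemma Ev_shift (hmeas : ∀ t, Measurable (X t)) (hss : StrictlyStationaryZ P X)
    {S : Set ℝ} (hS : MeasurableSet S) (a b t : ℤ) :
    P (Ev X S a b) = P (Ev X S (a + t) (b + t)) := by
  rcases lt_or_ge b a with h | h
  · have e1 : Ev X S a b = Set.univ := by
      ext ω; simp [Ev, Finset.Icc_eq_empty_of_lt h]
    have e2 : Ev X S (a + t) (b + t) = Set.univ := by
      ext ω; simp [Ev, Finset.Icc_eq_empty_of_lt (by omega : b + t < a + t)]
    rw [e1, e2]
  · set m := (b - a + 1).toNat with hm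
    have hmz : (m : ℤ) = b - a + 1 := Int.toNat_of_nonneg (by omega)
    set C : Set (Fin m → ℝ) := {f | ∀ i, f i ∈ S} with hCdef
    have hC : MeasurableSet C := by
      have : C = ⋂ i, (fun f : Fin m → ℝ => f i) ⁻¹' S := by ext f; simp [hCdef]
      rw [this]; exact MeasurableSet.iInter fun i => (measurable_pi_apply i) hS
    have hmapm : ∀ t' : ℤ, Measurable fun ω => fun i : Fin m => X (1 + t' + (i : ℕ)) ω :=
      fun t' => measurable_pi_lambda _ fun i => hmeas _
    have key : ∀ t' : ℤ, (fun ω => fun i : Fin m => X (1 + t' + (i : ℕ)) ω) ⁻¹' C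
        = Ev X S (1 + t') (t' + m) := by
      intro t'
      ext ω
      simp only [Set.mem_preimage, hCdef, Set.mem_setOf_eq, Ev, Finset.mem_Icc]
      constructor
      · intro hf i hi
        have hj : (i - (1 + t')).toNat < m := by omega
        have h2 := hf ⟨(i - (1 + t')).toNat, hj⟩
        simp only [Fin.val_mk] at h2
        rw [Int.toNat_of_nonneg (by omega : (0:ℤ) ≤ i - (1 + t'))] at h2
        rwa [show 1 + t' + (i - (1 + t')) = i from by ring] at h2
      · intro hf j
        have hj : ((j : ℕ) : ℤ) < m := by exact_mod_cast j.isLt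
        exact hf (1 + t' + (j : ℕ)) ⟨by omega, by omega⟩
    have ev1 : Ev X S a b = (fun ω => fun i : Fin m => X (1 + (a - 1) + (i : ℕ)) ω) ⁻¹' C := by
      rw [key (a - 1)]
      have e1 : 1 + (a - 1) = a := by ring
      have e2 : (a - 1) + (m : ℤ) = b := by omega
      rw [e1, e2]
    have ev2 : Ev X S (a + t) (b + t)
        = (fun ω => fun i : Fin m => X (1 + (a + t - 1) + (i : ℕ)) ω) ⁻¹' C := by
      rw [key (a + t - 1)]
      have e1 : 1 + (a + t - 1) = a + t := by ring
      have e2 : (a + t - 1) + (m : ℤ) = b + t := by omega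
      rw [e1, e2]
    rw [ev1, ev2, ← Measure.map_apply (hmapm (a - 1)) hC,
      ← Measure.map_apply (hmapm (a + t - 1)) hC, hss m (a - 1), hss m (a + t - 1)]

lemma toReal_prob_le_one (s : Set Ω) : (P s).toReal ≤ 1 := by
  calc (P s).toReal ≤ (1 : ℝ≥0∞).toReal := ENNReal.toReal_mono ENNReal.one_ne_top prob_le_one
  _ = 1 := ENNReal.toReal_one

lemma abs_le_alphaMix {A B : Set Ω} {t : ℤ}
    (hA : MeasurableSet[pastSigma X] A) (hB : MeasurableSet[futureSigma X t] B) :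
    |(P (A ∩ B)).toReal - (P A).toReal * (P B).toReal| ≤ alphaMix P X t := by
  apply le_csSup
  · refine ⟨1, ?_⟩
    rintro r ⟨A', B', -, -, rfl⟩
    have h1 : (P (A' ∩ B')).toReal ≤ 1 := toReal_prob_le_one P _
    have h2 : (P A').toReal ≤ 1 := toReal_prob_le_one P _
    have h3 : (P B').toReal ≤ 1 := toReal_prob_le_one P _
    have h4 : 0 ≤ (P (A' ∩ B')).toReal := ENNReal.toReal_nonneg
    have h5 : 0 ≤ (P A').toReal := ENNReal.toReal_nonneg
    have h6 : 0 ≤ (P B').toReal := ENNReal.toReal_nonneg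
    rw [abs_le]
    constructor <;> nlinarith
  · exact ⟨A, B, hA, hB, rfl⟩

/-- The key blocking inequality. -/
lemma key_ineq (hmeas : ∀ t, Measurable (X t)) (hss : StrictlyStationaryZ P X)
    {S : Set ℝ} (hS : MeasurableSet S) (n k : ℕ) (hn : 1 ≤ n) (hk : 1 ≤ k) :
    (P (Ev X S 1 (2 * n + k))).toReal
      ≤ (P (Ev X S 1 (n : ℤ))).toReal ^ 2 + alphaMix P X (k : ℤ) := by
  set A : Set Ω := Ev X S (1 - (n : ℤ)) 0 with hA
  set B : Set Ω := Ev X S ((k : ℤ) + 1) ((n : ℤ) + k) with hB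
  have hshift : P (Ev X S 1 (2 * n + k)) = P (Ev X S (1 - (n : ℤ)) ((n : ℤ) + k)) := by
    have h := Ev_shift P hmeas hss hS 1 (2 * n + k) (-(n : ℤ))
    rw [show (1 : ℤ) + -(n : ℤ) = 1 - n from by ring,
      show (2 * (n : ℤ) + k) + -(n : ℤ) = (n : ℤ) + k from by ring] at h
    exact h
  have hsub : Ev X S (1 - (n : ℤ)) ((n : ℤ) + k) ⊆ A ∩ B := by
    intro ω hω
    constructor
    · intro i hi
      refine hω i ?_
      simp only [Finset.mem_Icc] at hi ⊢
      omega
    · intro i hi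
      refine hω i ?_
      simp only [Finset.mem_Icc] at hi ⊢
      omega
  have hAmeas : MeasurableSet[pastSigma X] A := Ev_past hS le_rfl
  have hBmeas : MeasurableSet[futureSigma X (k : ℤ)] B := Ev_future hS (by omega)
  have habs := abs_le_alphaMix P hAmeas hBmeas
  have hPA : P A = P (Ev X S 1 (n : ℤ)) := by
    have h := Ev_shift P hmeas hss hS (1 - (n : ℤ)) 0 (n : ℤ)
    rw [show (1 : ℤ) - n + n = 1 from by ring, zero_add] at h
    exact h
  have hPB : P B = P (Ev X S 1 (n : ℤ)) := by
    have h := Ev_shift P hmeas hss hS ((k : ℤ) + 1) ((n : ℤ) + k) (-(k : ℤ))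
    rw [show (k : ℤ) + 1 + -(k : ℤ) = 1 from by ring,
      show (n : ℤ) + k + -(k : ℤ) = n from by ring] at h
    exact h
  have step1 : (P (Ev X S 1 (2 * n + k))).toReal ≤ (P (A ∩ B)).toReal := by
    rw [hshift]
    exact ENNReal.toReal_mono (measure_ne_top P _) (measure_mono hsub)
  have step2 : (P (A ∩ B)).toReal
      ≤ (P A).toReal * (P B).toReal + alphaMix P X (k : ℤ) := by
    have := (abs_le.mp habs).2
    linarith
  rw [hPA, hPB] at step2
  calc (P (Ev X S 1 (2 * n + k))).toReal ≤ (P (A ∩ B)).toReal := step1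
  _ ≤ (P (Ev X S 1 (n : ℤ))).toReal * (P (Ev X S 1 (n : ℤ))).toReal + alphaMix P X (k : ℤ) :=
      step2
  _ = (P (Ev X S 1 (n : ℤ))).toReal ^ 2 + alphaMix P X (k : ℤ) := by ring

/-- Pure real-analytic limit lemma. -/
lemma tendsto_zero_of_subadd (u α : ℕ → ℝ) (hu_anti : Antitone u) (h0 : ∀ n, 0 ≤ u n)
    (h1 : u 1 < 1) (hineq : ∀ n, 1 ≤ n → ∀ k, 1 ≤ k → u (2 * n + k) ≤ u n ^ 2 + α k)
    (hα : Tendsto α atTop (nhds 0)) : Tendsto u atTop (nhds 0) := by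
  have hbdd : BddBelow (Set.range u) := ⟨0, by rintro r ⟨n, rfl⟩; exact h0 n⟩
  set L := ⨅ n, u n with hL
  have hten : Tendsto u atTop (nhds L) := tendsto_atTop_ciInf hu_anti hbdd
  have hL0 : 0 ≤ L := le_ciInf h0
  have hL1 : L < 1 := lt_of_le_of_lt (ciInf_le hbdd 1) h1
  have hLk : ∀ k, 1 ≤ k → L ≤ L ^ 2 + α k := by
    intro k hk
    have hlim : Tendsto (fun n => u n ^ 2 + α k) atTop (nhds (L ^ 2 + α k)) :=
      (hten.pow 2).add_const (α k)
    refine ge_of_tendsto hlim ?_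
    filter_upwards [eventually_ge_atTop 1] with n hn
    exact le_trans (ciInf_le hbdd (2 * n + k)) (hineq n hn k hk)
  have hLL : L ≤ L ^ 2 := by
    have hlim : Tendsto (fun k => L ^ 2 + α k) atTop (nhds (L ^ 2 + 0)) :=
      tendsto_const_nhds.add hα
    rw [add_zero] at hlim
    refine ge_of_tendsto hlim ?_
    filter_upwards [eventually_ge_atTop 1] with k hk using hLk k hk
  have hL_eq : L = 0 := by nlinarith
  rwa [hL_eq] at hten

/-- Main convergence lemma for blocks. -/
lemma tendsto_Ev_zero (hmeas : ∀ t, Measurable (X t)) (hss : StrictlyStationaryZ P X)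
    (hmix : Tendsto (fun t : ℤ => alphaMix P X t) atTop (nhds 0))
    {S : Set ℝ} (hS : MeasurableSet S) (h1 : (P (Ev X S 1 1)).toReal < 1) :
    Tendsto (fun n : ℕ => P (Ev X S 1 ((max n 1 : ℕ) : ℤ))) atTop (nhds 0) := by
  set u : ℕ → ℝ := fun n => (P (Ev X S 1 (n : ℤ))).toReal with hu
  have hu_anti : Antitone u := by
    apply antitone_nat_of_succ_le
    intro n
    apply ENNReal.toReal_mono (measure_ne_top P _)
    apply measure_mono
    intro ω hω i hi
    refine hω i ?_
    simp only [Finset.mem_Icc] at hi ⊢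
    push_cast
    omega
  have h0 : ∀ n, 0 ≤ u n := fun n => ENNReal.toReal_nonneg
  have hineq : ∀ n, 1 ≤ n → ∀ k, 1 ≤ k →
      u (2 * n + k) ≤ u n ^ 2 + alphaMix P X (k : ℤ) := by
    intro n hn k hk
    have h := key_ineq P hmeas hss hS n k hn hk
    simpa [hu] using h
  have hα : Tendsto (fun k : ℕ => alphaMix P X (k : ℤ)) atTop (nhds 0) :=
    hmix.comp tendsto_natCast_atTop_atTop
  have h1' : u 1 < 1 := by simpa [hu] using h1
  have hmain : Tendsto u atTop (nhds 0) :=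
    tendsto_zero_of_subadd u _ hu_anti h0 h1' hineq hα
  have hmax : Tendsto (fun n : ℕ => max n 1) atTop atTop :=
    tendsto_atTop_mono (fun n => le_max_left n 1) tendsto_id
  have hcomp : Tendsto (fun n : ℕ => u (max n 1)) atTop (nhds 0) := hmain.comp hmax
  have heq : (fun n : ℕ => P (Ev X S 1 ((max n 1 : ℕ) : ℤ)))
      = fun n : ℕ => ENNReal.ofReal (u (max n 1)) := by
    funext n
    rw [hu]
    exact (ENNReal.ofReal_toReal (measure_ne_top P _)).symm
  rw [heq]
  have := ENNReal.tendsto_ofReal hcomp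
  simpa using this

end MixAux

theorem stmt_4 {Ω : Type*} [MeasurableSpace Ω] (P : Measure Ω) [IsProbabilityMeasure P]
    (X : ℤ → Ω → ℝ) (hmeas : ∀ t, Measurable (X t))
    (hss : StrictlyStationaryZ P X)
    (hcont : Continuous (cdfOf P (X 1)))
    (hmix : Tendsto (fun t : ℤ => alphaMix P X t) atTop (nhds 0)) :
    ∀ x : ℝ, lowerEnd (cdfOf P (X 1)) < (x : EReal) →
      (x : EReal) < upperEnd (cdfOf P (X 1)) →
      Tendsto (fun n => P {ω | x ≤ rmin (fun t : ℕ => X (t : ℤ)) n ω}) atTop (nhds 0) ∧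
      Tendsto (fun n => P {ω | rmax (fun t : ℕ => X (t : ℤ)) n ω ≤ x}) atTop (nhds 0) := by
  intro x hlow hupp
  set F := cdfOf P (X 1) with hF
  have hFx_pos : 0 < F x := by
    rcases lt_or_ge 0 (F x) with h | h
    · exact h
    · have hFx0 : F x = 0 := le_antisymm h ENNReal.toReal_nonneg
      have hle : (x : EReal) ≤ lowerEnd F := le_sSup ⟨x, hFx0, rfl⟩
      exact absurd (lt_of_lt_of_le hlow hle) (lt_irrefl _)
  have hFx_lt : F x < 1 := by
    rcases lt_or_ge (F x) 1 with h | h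
    · exact h
    · have hFx1 : F x = 1 := le_antisymm (toReal_prob_le_one P _) h
      have hle : upperEnd F ≤ (x : EReal) := sInf_le ⟨x, hFx1, rfl⟩
      exact absurd (lt_of_lt_of_le hupp hle) (lt_irrefl _)
  constructor
  · -- the min part
    have hev : ∀ n : ℕ, {ω | x ≤ rmin (fun t : ℕ => X (t : ℤ)) n ω}
        = Ev X (Set.Ici x) 1 ((max n 1 : ℕ) : ℤ) := by
      intro n
      ext ω
      simp only [Set.mem_setOf_eq, rmin, Finset.le_inf'_iff, Ev, Finset.mem_Icc, Set.mem_Ici]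
      constructor
      · intro h i hi
        have h2 := h i.toNat ⟨by omega, by omega⟩
        rwa [Int.toNat_of_nonneg (by omega : (0:ℤ) ≤ i)] at h2
      · intro h t ht
        exact h (t : ℤ) ⟨by exact_mod_cast ht.1, by exact_mod_cast ht.2⟩
    -- (P (Ev X (Ici x) 1 1)).toReal < 1, via continuity of F
    have h11 : Ev X (Set.Ici x) 1 1 = {ω | X 1 ω < x}ᶜ := by
      ext ω
      simp [Ev, Set.mem_Ici, not_lt, Finset.Icc_self]
    have hones : 0 < P {ω | X 1 ω < x} := by
      have hev2 : ∀ᶠ z in nhds x, 0 < F z :=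
        (hcont.tendsto x).eventually (eventually_gt_nhds hFx_pos)
      have hev3 : ∀ᶠ z in nhdsWithin x (Set.Iio x), 0 < F z ∧ z ∈ Set.Iio x :=
        (hev2.filter_mono nhdsWithin_le_nhds).and self_mem_nhdsWithin
      obtain ⟨y, hy0, hyx⟩ := hev3.exists
      have hsub : {ω | X 1 ω ≤ y} ⊆ {ω | X 1 ω < x} :=
        fun ω h => show X 1 ω < x from lt_of_le_of_lt h hyx
      have hypos : 0 < P {ω | X 1 ω ≤ y} := by
        by_contra h
        push_neg at h
        have : P {ω | X 1 ω ≤ y} = 0 := le_antisymm h zero_le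
        have : F y = 0 := by simp [hF, cdfOf, this]
        linarith
      exact lt_of_lt_of_le hypos (measure_mono hsub)
    have hlt1 : (P (Ev X (Set.Ici x) 1 1)).toReal < 1 := by
      rw [h11, prob_compl_eq_one_sub
          (show MeasurableSet {ω | X 1 ω < x} from (hmeas 1) measurableSet_Iio),
        ENNReal.toReal_sub_of_le prob_le_one ENNReal.one_ne_top, ENNReal.toReal_one]
      have : 0 < (P {ω | X 1 ω < x}).toReal :=
        ENNReal.toReal_pos (ne_of_gt hones) (measure_ne_top P _)
      linarith
    have := tendsto_Ev_zero P hmeas hss hmix measurableSet_Ici hlt1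
    simpa only [hev] using this
  · -- the max part
    have hev : ∀ n : ℕ, {ω | rmax (fun t : ℕ => X (t : ℤ)) n ω ≤ x}
        = Ev X (Set.Iic x) 1 ((max n 1 : ℕ) : ℤ) := by
      intro n
      ext ω
      simp only [Set.mem_setOf_eq, rmax, Finset.sup'_le_iff, Ev, Finset.mem_Icc, Set.mem_Iic]
      constructor
      · intro h i hi
        have h2 := h i.toNat ⟨by omega, by omega⟩
        rwa [Int.toNat_of_nonneg (by omega : (0:ℤ) ≤ i)] at h2
      · intro h t ht
        exact h (t : ℤ) ⟨by exact_mod_cast ht.1, by exact_mod_cast ht.2⟩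
    have h11 : Ev X (Set.Iic x) 1 1 = {ω | X 1 ω ≤ x} := by
      ext ω
      simp [Ev, Set.mem_Iic, Finset.Icc_self]
    have hlt1 : (P (Ev X (Set.Iic x) 1 1)).toReal < 1 := by
      rw [h11]
      exact hFx_lt
    have := tendsto_Ev_zero P hmeas hss hmix measurableSet_Iic hlt1
    simpa only [hev] using this
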